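/- arXiv:1504.04316 — 3 statements merged into one kernel-verified Lean document; each statement's English description precedes it below -/
import Mathlib

section
/- There exists η₀ ∈ (2/3, 1) (namely η₀ = (√7 − 1)/2) such that for all r₁, r₂ ≥ 0 and all real θ₁, θ₂ with cos(θ₁ − θ₂) ≤ 1/2, one has |r₁·e^{iθ₁} + r₂·e^{iθ₂}| ≤ max{η₀·r₁ + r₂, r₁ + η₀·r₂}. -/
theorem stmt_6 :
    ∃ η₀ : ℝ, 2/3 < η₀ ∧ η₀ < 1 ∧ η₀ = (Real.sqrt 7 - 1) / 2 ∧
      ∀ r₁ r₂ θ₁ θ₂ : ℝ, 0 ≤ r₁ → 0 ≤ r₂ → Real.cos (θ₁ - θ₂) ≤ 1/2 →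
        ‖(r₁ : ℂ) * Complex.exp (θ₁ * Complex.I)
            + (r₂ : ℂ) * Complex.exp (θ₂ * Complex.I)‖
          ≤ max (η₀ * r₁ + r₂) (r₁ + η₀ * r₂) := by
  have h7 : (0:ℝ) ≤ 7 := by norm_num
  have hs : Real.sqrt 7 ^ 2 = 7 := Real.sq_sqrt h7
  have hs0 : 0 ≤ Real.sqrt 7 := Real.sqrt_nonneg 7
  have hlb : (7:ℝ)/3 < Real.sqrt 7 := by nlinarith
  have hub : Real.sqrt 7 < 3 := by nlinarith
  set η : ℝ := (Real.sqrt 7 - 1) / 2 with hη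
  refine ⟨η, by rw [hη]; linarith, by rw [hη]; linarith, rfl, ?_⟩
  intro r₁ r₂ θ₁ θ₂ h1 h2 hc
  set z : ℂ := (r₁ : ℂ) * Complex.exp (θ₁ * Complex.I)
      + (r₂ : ℂ) * Complex.exp (θ₂ * Complex.I) with hz
  have hA2 : ‖z‖ ^ 2
      = r₁^2 + r₂^2 + 2*r₁*r₂*Real.cos (θ₁ - θ₂) := by
    rw [Complex.sq_norm, hz]
    simp [Complex.normSq_apply, Complex.exp_mul_I, Real.cos_sub,
      Complex.cos_ofReal_re, Complex.sin_ofReal_re]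
    linear_combination r₁^2 * Real.sin_sq_add_cos_sq θ₁
      + r₂^2 * Real.sin_sq_add_cos_sq θ₂
  have hA0 : 0 ≤ ‖z‖ := norm_nonneg z
  have hη0 : 0 ≤ η := by rw [hη]; linarith
  have hη2 : η^2 = 2 - Real.sqrt 7 / 2 := by rw [hη]; field_simp; nlinarith
  have hc2 : 2*r₁*r₂*Real.cos (θ₁ - θ₂) ≤ r₁*r₂ := by
    nlinarith [mul_nonneg h1 h2]
  rcases le_total r₁ r₂ with h | h
  · refine le_trans ?_ (le_max_left (η * r₁ + r₂) (r₁ + η * r₂))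
    have hM0 : 0 ≤ η * r₁ + r₂ := by positivity
    have key : ‖z‖^2 ≤ (η * r₁ + r₂)^2 := by
      rw [hA2]
      nlinarith [mul_nonneg h1 (sub_nonneg.mpr h), sq_nonneg r₁]
    nlinarith [key]
  · refine le_trans ?_ (le_max_right (η * r₁ + r₂) (r₁ + η * r₂))
    have hM0 : 0 ≤ r₁ + η * r₂ := by positivity
    have key : ‖z‖^2 ≤ (r₁ + η * r₂)^2 := by
      rw [hA2]
      nlinarith [mul_nonneg h2 (sub_nonneg.mpr h), sq_nonneg r₂]
    nlinarith [key]
end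

section
/- Let (Y, μ) be a probability space, F : Y → Y measure preserving, R : Y → (0,∞) measurable with R̄ = ∫ R dμ < ∞, and let μ^R = (μ × Leb)/R̄ be the normalized measure on the suspension Y^R = {(y,u) : 0 ≤ u < R(y)}. For v, w ∈ L^∞(Y^R), n ≥ 1, s ∈ ℂ, define v_s(y) = ∫₀^{R(y)} e^{su} v(y,u) du, w_s(y) = ∫₀^{R(y)} e^{−su} w(y,u) du, R_n = Σ_{j=0}^{n−1} R∘F^j, and J_n(t) = ∫_{Y^R} 1_{{R_n(y) < t+u < R_{n+1}(y)}} v(y,u) w(F^n y, t+u−R_n(y)) dμ^R. Then the Laplace transform Ĵ_n(s) = ∫₀^∞ e^{−st} J_n(t) dt satisfies Ĵ_n(s) = (1/R̄)·∫_Y e^{−s R_n} v_s · (w_s ∘ F^n) dμ, for all s with Re s > 0. -/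
open MeasureTheory Set

lemma norm_cexp_neg_mul (s : ℂ) (t : ℝ) : ‖Complex.exp (-s * t)‖ = Real.exp (-s.re * t) := by
  rw [Complex.norm_exp]
  congr 1
  simp [Complex.mul_re]

lemma cexp_int (s : ℂ) (hs : 0 < s.re) :
    IntegrableOn (fun t : ℝ => Complex.exp (-s * t)) (Ioi 0) volume := by
  refine Integrable.mono' (exp_neg_integrableOn_Ioi 0 hs)
    ((Complex.measurable_exp.comp ((measurable_const.mul Complex.measurable_ofReal))).aestronglyMeasurable)
    (Filter.Eventually.of_forall fun t => ?_)
  rw [norm_cexp_neg_mul]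

lemma aux_t (s : ℂ) (hs : 0 < s.re) (c Ry R' : ℝ) (hRy : 0 < Ry) (hcRy : Ry ≤ c)
    (v1 w1 : ℝ → ℝ) (hv1 : Measurable v1) (hw1 : Measurable w1)
    (Mv Mw : ℝ) (hMv : 0 ≤ Mv) (hMw : 0 ≤ Mw)
    (hv1bd : ∀ u, |v1 u| ≤ Mv) (hw1bd : ∀ u, |w1 u| ≤ Mw) :
    (∫ t in Ioi (0:ℝ), Complex.exp (-s * t) *
        ((∫ u in Ioc (0:ℝ) Ry, if c < t + u ∧ t + u < c + R' then v1 u * w1 (t + u - c) else 0 : ℝ) : ℂ))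
      = Complex.exp (-s * c) * (∫ u in Ioc (0:ℝ) Ry, Complex.exp (s * u) * (v1 u : ℂ)) *
        (∫ u in Ioc (0:ℝ) R', Complex.exp (-s * u) * (w1 u : ℂ)) := by
  set W : ℂ := ∫ u in Ioc (0:ℝ) R', Complex.exp (-s * u) * (w1 u : ℂ) with hW
  -- push the exponential and the cast inside the u-integral
  have step1 : ∀ t : ℝ, Complex.exp (-s * t) *
      ((∫ u in Ioc (0:ℝ) Ry, if c < t + u ∧ t + u < c + R' then v1 u * w1 (t + u - c) else 0 : ℝ) : ℂ)
      = ∫ u in Ioc (0:ℝ) Ry, Complex.exp (-s * t) *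
          ((if c < t + u ∧ t + u < c + R' then v1 u * w1 (t + u - c) else 0 : ℝ) : ℂ) := by
    intro t
    rw [integral_const_mul]
    congr 1
    exact integral_ofReal.symm
  simp_rw [step1]
  -- Fubini
  have hmeasG : Measurable (fun p : ℝ × ℝ => Complex.exp (-s * p.1) *
      ((if c < p.1 + p.2 ∧ p.1 + p.2 < c + R' then v1 p.2 * w1 (p.1 + p.2 - c) else 0 : ℝ) : ℂ)) := by
    apply Measurable.mul
    · exact Complex.measurable_exp.comp (measurable_const.mul (Complex.measurable_ofReal.comp measurable_fst))
    · apply Complex.measurable_ofReal.comp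
      apply Measurable.ite
      · exact (measurableSet_lt measurable_const (measurable_fst.add measurable_snd)).inter
          (measurableSet_lt (measurable_fst.add measurable_snd) measurable_const)
      · exact (hv1.comp measurable_snd).mul
          (hw1.comp ((measurable_fst.add measurable_snd).sub measurable_const))
      · exact measurable_const
  have hint : Integrable (Function.uncurry (fun t u : ℝ => Complex.exp (-s * t) *
      ((if c < t + u ∧ t + u < c + R' then v1 u * w1 (t + u - c) else 0 : ℝ) : ℂ)))
      ((volume.restrict (Ioi (0:ℝ))).prod (volume.restrict (Ioc (0:ℝ) Ry))) := by
    have hb : Integrable (fun p : ℝ × ℝ => (Mv * Mw * Real.exp (-s.re * p.1)) * (1:ℝ))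
        ((volume.restrict (Ioi (0:ℝ))).prod (volume.restrict (Ioc (0:ℝ) Ry))) := by
      exact Integrable.mul_prod ((exp_neg_integrableOn_Ioi 0 hs).const_mul (Mv * Mw))
        ((integrableOn_const_iff).mpr (Or.inr measure_Ioc_lt_top))
    refine hb.mono' (hmeasG.aestronglyMeasurable) (Filter.Eventually.of_forall fun p => ?_)
    simp only [Function.uncurry]
    rw [norm_mul, norm_cexp_neg_mul, mul_one, mul_comm (Mv * Mw)]
    gcongr
    rw [Complex.norm_real]
    split_ifs with h
    · rw [Real.norm_eq_abs, abs_mul]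
      exact mul_le_mul (hv1bd _) (hw1bd _) (abs_nonneg _) hMv
    · simpa using mul_nonneg hMv hMw
  rw [integral_integral_swap hint]
  -- pointwise computation in u
  have key : ∀ u ∈ Ioc (0:ℝ) Ry,
      (∫ t in Ioi (0:ℝ), Complex.exp (-s * t) *
        ((if c < t + u ∧ t + u < c + R' then v1 u * w1 (t + u - c) else 0 : ℝ) : ℂ))
      = Complex.exp (-s * c) * (Complex.exp (s * u) * (v1 u : ℂ)) * W := by
    intro u hu
    have huc : u ≤ c := hu.2.trans hcRy
    set h : ℝ → ℂ := fun t => Complex.exp (-s * t) *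
        ((if c < t + u ∧ t + u < c + R' then v1 u * w1 (t + u - c) else 0 : ℝ) : ℂ) with hh
    have hzero : ∀ t ∉ Ioi (0:ℝ), h t = 0 := by
      intro t ht
      simp only [mem_Ioi, not_lt] at ht
      have : ¬ (c < t + u) := by push_neg; linarith [hu.2]
      simp [hh, this]
    rw [setIntegral_eq_integral_of_forall_compl_eq_zero hzero]
    rw [← integral_add_right_eq_self h (c - u)]
    have hshift : ∀ t : ℝ, h (t + (c - u)) = Complex.exp (-s * (c - u)) *
        ((Ioo (0:ℝ) R').indicator (fun t => Complex.exp (-s * t) * ((v1 u * w1 t : ℝ) : ℂ)) t) := by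
      intro t
      have e1 : t + (c - u) + u = t + c := by ring
      have e2 : t + (c - u) + u - c = t := by ring
      have e3 : t + c - c = t := by ring
      simp only [hh, e1, e2, e3]
      have hcond : (c < t + c ∧ t + c < c + R') ↔ (t ∈ Ioo (0:ℝ) R') := by
        constructor
        · rintro ⟨h1, h2⟩; exact ⟨by linarith, by linarith⟩
        · rintro ⟨h1, h2⟩; exact ⟨by linarith, by linarith⟩
      by_cases ht : t ∈ Ioo (0:ℝ) R'
      · rw [if_pos (hcond.mpr ht), indicator_of_mem ht]
        push_cast
        rw [show -s * ((t:ℂ) + ((c:ℂ) - (u:ℂ))) = -s * ((c:ℂ) - (u:ℂ)) + -s * (t:ℂ) by ring,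
          Complex.exp_add]
        ring
      · rw [if_neg (fun hc => ht (hcond.mp hc)), indicator_of_notMem ht]
        simp
    simp_rw [hshift]
    rw [integral_const_mul, integral_indicator measurableSet_Ioo, ← integral_Ioc_eq_integral_Ioo]
    have : (∫ t in Ioc (0:ℝ) R', Complex.exp (-s * t) * ((v1 u * w1 t : ℝ) : ℂ))
        = (v1 u : ℂ) * W := by
      rw [hW, ← integral_const_mul]
      congr 1
      ext t
      push_cast
      ring
    rw [this]
    rw [show -s * ((c:ℂ) - u) = -s * c + s * u by ring, Complex.exp_add]
    push_cast
    ring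
  rw [setIntegral_congr_fun measurableSet_Ioc key]
  rw [integral_mul_const W, integral_const_mul]

theorem stmt_16 {Y : Type*} [MeasurableSpace Y] (μ : Measure Y) [IsProbabilityMeasure μ]
    (F : Y → Y) (hF : MeasurePreserving F μ μ)
    (R : Y → ℝ) (hRmeas : Measurable R) (hRpos : ∀ y, 0 < R y)
    (hRint : Integrable R μ)
    (Rbar : ℝ) (hRbar : Rbar = ∫ y, R y ∂μ) (hRbarpos : 0 < Rbar)
    (v w : Y → ℝ → ℝ)
    (hvmeas : Measurable (Function.uncurry v)) (hwmeas : Measurable (Function.uncurry w))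
    (Mv Mw : ℝ) (hvbd : ∀ y u, |v y u| ≤ Mv) (hwbd : ∀ y u, |w y u| ≤ Mw)
    (n : ℕ) (hn : 1 ≤ n) (s : ℂ) (hs : 0 < s.re)
    (Rn : Y → ℝ) (hRn : Rn = fun y => ∑ j ∈ Finset.range n, R (F^[j] y))
    (vs ws : Y → ℂ)
    (hvs : ∀ y, vs y = ∫ u in Set.Ioc (0:ℝ) (R y), Complex.exp (s * u) * (v y u : ℂ))
    (hws : ∀ y, ws y = ∫ u in Set.Ioc (0:ℝ) (R y), Complex.exp (-s * u) * (w y u : ℂ))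
    (Jn : ℝ → ℝ)
    (hJn : ∀ t, Jn t = (1 / Rbar) *
      ∫ y, (∫ u in Set.Ioc (0:ℝ) (R y),
        if Rn y < t + u ∧ t + u < Rn y + R (F^[n] y)
          then v y u * w (F^[n] y) (t + u - Rn y) else 0) ∂μ) :
    (∫ t in Set.Ioi (0:ℝ), Complex.exp (-s * t) * (Jn t : ℂ)) =
      (1 / Rbar : ℂ) * ∫ y, Complex.exp (-s * (Rn y : ℂ)) * vs y * ws (F^[n] y) ∂μ := by
  classical
  have hY : Nonempty Y := by
    by_contra hY
    have h1 : μ Set.univ = 1 := measure_univ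
    rw [Set.univ_eq_empty_iff.mpr (not_nonempty_iff.mp hY), measure_empty] at h1
    simp at h1
  have hMv : 0 ≤ Mv := (abs_nonneg _).trans (hvbd (Classical.arbitrary Y) 0)
  have hMw : 0 ≤ Mw := (abs_nonneg _).trans (hwbd (Classical.arbitrary Y) 0)
  have hFn : Measurable (F^[n]) := hF.measurable.iterate n
  have hRnm : Measurable Rn := by
    rw [hRn]
    exact Finset.measurable_sum _ fun j _ => hRmeas.comp (hF.measurable.iterate j)
  have hRle : ∀ y, R y ≤ Rn y := by
    intro y
    rw [hRn]
    have h0 := Finset.single_le_sum (f := fun j => R (F^[j] y))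
      (fun j _ => (hRpos _).le) (Finset.mem_range.mpr hn)
    simpa using h0
  -- the inner function
  set inn : Y → ℝ → ℝ := fun y t => ∫ u in Ioc (0:ℝ) (R y),
    if Rn y < t + u ∧ t + u < Rn y + R (F^[n] y)
      then v y u * w (F^[n] y) (t + u - Rn y) else 0 with hinn
  -- per-u measurability
  have hmeas_u : ∀ t y, Measurable (fun u : ℝ =>
      if Rn y < t + u ∧ t + u < Rn y + R (F^[n] y)
        then v y u * w (F^[n] y) (t + u - Rn y) else 0) := by
    intro t y
    apply Measurable.ite
    · exact (measurableSet_lt measurable_const (measurable_const.add measurable_id)).inter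
        (measurableSet_lt (measurable_const.add measurable_id) measurable_const)
    · exact ((hvmeas.comp (measurable_prodMk_left)).mul
        ((hwmeas.comp (measurable_prodMk_left)).comp
          ((measurable_const.add measurable_id).sub measurable_const)))
    · exact measurable_const
  -- bound on inner
  have hinn_bd : ∀ y t, |inn y t| ≤ Mv * Mw * R y := by
    intro y t
    have hb := norm_setIntegral_le_of_norm_le_const (μ := volume) (s := Ioc (0:ℝ) (R y))
      (f := fun u => if Rn y < t + u ∧ t + u < Rn y + R (F^[n] y)
        then v y u * w (F^[n] y) (t + u - Rn y) else 0) (C := Mv * Mw)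
      measure_Ioc_lt_top
      (fun u _ => by
        show ‖(if Rn y < t + u ∧ t + u < Rn y + R (F^[n] y)
          then v y u * w (F^[n] y) (t + u - Rn y) else 0 : ℝ)‖ ≤ Mv * Mw
        rw [Real.norm_eq_abs]
        split_ifs with h
        · rw [abs_mul]; exact mul_le_mul (hvbd _ _) (hwbd _ _) (abs_nonneg _) hMv
        · simpa using mul_nonneg hMv hMw)
    rw [Real.volume_real_Ioc_of_le (hRpos y).le, sub_zero] at hb
    simpa [Real.norm_eq_abs] using hb
  -- joint measurability of inner
  have hFmeas : Measurable (fun p : (ℝ × Y) × ℝ =>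
      if 0 < p.2 ∧ p.2 ≤ R p.1.2 then
        (if Rn p.1.2 < p.1.1 + p.2 ∧ p.1.1 + p.2 < Rn p.1.2 + R (F^[n] p.1.2)
          then v p.1.2 p.2 * w (F^[n] p.1.2) (p.1.1 + p.2 - Rn p.1.2) else 0) else 0) := by
    have m1 : Measurable fun p : (ℝ × Y) × ℝ => p.1.1 := measurable_fst.fst
    have m2 : Measurable fun p : (ℝ × Y) × ℝ => p.1.2 := measurable_fst.snd
    have m3 : Measurable fun p : (ℝ × Y) × ℝ => p.2 := measurable_snd
    apply Measurable.ite
    · exact (measurableSet_lt measurable_const m3).inter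
        (measurableSet_le m3 (hRmeas.comp m2))
    · apply Measurable.ite
      · exact (measurableSet_lt (hRnm.comp m2) (m1.add m3)).inter
          (measurableSet_lt (m1.add m3) ((hRnm.comp m2).add (hRmeas.comp (hFn.comp m2))))
      · exact (hvmeas.comp (m2.prodMk m3)).mul
          (hwmeas.comp ((hFn.comp m2).prodMk ((m1.add m3).sub (hRnm.comp m2))))
      · exact measurable_const
    · exact measurable_const
  have hinn_eq : ∀ t y, inn y t = ∫ u : ℝ,
      (if 0 < u ∧ u ≤ R y then
        (if Rn y < t + u ∧ t + u < Rn y + R (F^[n] y)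
          then v y u * w (F^[n] y) (t + u - Rn y) else 0) else 0) := by
    intro t y
    simp only [hinn]
    rw [← integral_indicator measurableSet_Ioc]
    congr 1
    ext u
    rw [Set.indicator_apply]
    simp [Set.mem_Ioc]
  have hinnSM : StronglyMeasurable (fun p : ℝ × Y => inn p.2 p.1) := by
    have := (hFmeas.stronglyMeasurable).integral_prod_right'
      (ν := (volume : Measure ℝ))
    convert this using 1
    ext p
    exact hinn_eq p.1 p.2
  -- global Fubini integrand
  have hGint : Integrable (Function.uncurry (fun (t : ℝ) (y : Y) =>
      Complex.exp (-s * t) * ((inn y t : ℝ) : ℂ)))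
      ((volume.restrict (Ioi (0:ℝ))).prod μ) := by
    have hb : Integrable (fun p : ℝ × Y => Real.exp (-s.re * p.1) * (Mv * Mw * R p.2))
        ((volume.restrict (Ioi (0:ℝ))).prod μ) :=
      Integrable.mul_prod (exp_neg_integrableOn_Ioi 0 hs) (hRint.const_mul (Mv * Mw))
    refine hb.mono' ?_ (Filter.Eventually.of_forall fun p => ?_)
    · apply AEStronglyMeasurable.mul
      · exact (Complex.measurable_exp.comp (measurable_const.mul
          (Complex.measurable_ofReal.comp measurable_fst))).aestronglyMeasurable
      · exact (Complex.continuous_ofReal.comp_stronglyMeasurable hinnSM).aestronglyMeasurable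
    · simp only [Function.uncurry]
      rw [norm_mul, norm_cexp_neg_mul, Complex.norm_real, Real.norm_eq_abs]
      gcongr
      exact hinn_bd _ _
  -- push exp and cast inside the y-integral
  have step1 : ∀ t : ℝ, Complex.exp (-s * t) * ((∫ y, inn y t ∂μ : ℝ) : ℂ)
      = ∫ y, Complex.exp (-s * t) * ((inn y t : ℝ) : ℂ) ∂μ := by
    intro t
    rw [integral_const_mul]
    congr 1
    exact integral_ofReal.symm
  have hswap : (∫ t in Ioi (0:ℝ), (∫ y, Complex.exp (-s * t) * ((inn y t : ℝ) : ℂ) ∂μ))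
      = ∫ y, (∫ t in Ioi (0:ℝ), Complex.exp (-s * t) * ((inn y t : ℝ) : ℂ)) ∂μ :=
    integral_integral_swap hGint
  have perY : ∀ y, (∫ t in Ioi (0:ℝ), Complex.exp (-s * t) * ((inn y t : ℝ) : ℂ))
      = Complex.exp (-s * (Rn y : ℂ)) * vs y * ws (F^[n] y) := by
    intro y
    have haux := aux_t s hs (Rn y) (R y) (R (F^[n] y)) (hRpos y) (hRle y)
      (v y) (w (F^[n] y))
      (hvmeas.comp measurable_prodMk_left) (hwmeas.comp measurable_prodMk_left)
      Mv Mw hMv hMw (hvbd y) (hwbd (F^[n] y))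
    simp only [hinn]
    rw [haux, hvs, hws]
  have hJ : ∀ t, Jn t = (1 / Rbar) * ∫ y, inn y t ∂μ := by
    intro t
    rw [hJn t]
  calc (∫ t in Ioi (0:ℝ), Complex.exp (-s * t) * (Jn t : ℂ))
      = ∫ t in Ioi (0:ℝ), (1 / Rbar : ℂ) *
          (Complex.exp (-s * t) * ((∫ y, inn y t ∂μ : ℝ) : ℂ)) := by
        refine setIntegral_congr_fun measurableSet_Ioi (fun t _ => ?_)
        rw [hJ t]
        push_cast
        ring
    _ = (1 / Rbar : ℂ) * ∫ t in Ioi (0:ℝ),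
          Complex.exp (-s * t) * ((∫ y, inn y t ∂μ : ℝ) : ℂ) := integral_const_mul _ _
    _ = (1 / Rbar : ℂ) * ∫ y, Complex.exp (-s * (Rn y : ℂ)) * vs y * ws (F^[n] y) ∂μ := by
        congr 1
        simp_rw [step1]
        rw [hswap]
        exact integral_congr_ae (Filter.Eventually.of_forall perY)
end

section
/- Let (Y, μ) be a probability space and R : Y → (0,∞) measurable with ∫_Y e^{aR} dμ < ∞ for some a > 0. Define, for v, w ∈ L^∞ of the suspension Y^R, J₀(t) = (1/R̄)∫_Y ∫₀^{R(y)} 1_{{t+u < R(y)}} v(y,u) w(y,t+u) du dμ(y). Then the Laplace transform Ĵ₀(s) = ∫₀^∞ e^{−st} J₀(t) dt extends analytically to {Re s > −a} and satisfies |Ĵ₀(s)| ≤ (1/R̄)·a^{−2}·(∫_Y e^{aR} dμ)·‖v‖_∞‖w‖_∞ for all s with Re s ≥ −a. -/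
open MeasureTheory Set Real

lemma aux_deriv (a R : ℝ) (ha : 0 < a) (t : ℝ) :
    HasDerivAt (fun t => Real.exp (a*t)*(R - t)/a + Real.exp (a*t)/a^2)
      (Real.exp (a*t) * (R - t)) t := by
  have h1 : HasDerivAt (fun t : ℝ => Real.exp (a*t)) (Real.exp (a*t) * a) t :=
    (Real.hasDerivAt_exp (a*t)).comp t (by simpa using (hasDerivAt_id t).const_mul a)
  have h2 : HasDerivAt (fun t : ℝ => R - t) (-1) t := by
    simpa using (hasDerivAt_id t).const_sub R
  have h3 := ((h1.mul h2).div_const a).add (h1.div_const (a^2))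
  refine h3.congr_deriv ?_
  field_simp
  ring

lemma aux_int_val (a R : ℝ) (ha : 0 < a) (hR : 0 ≤ R) :
    ∫ t in Set.Ioc (0:ℝ) R, Real.exp (a*t) * (R - t) ≤ Real.exp (a*R) / a^2 := by
  rw [← intervalIntegral.integral_of_le hR]
  have hcont : Continuous (fun t : ℝ => Real.exp (a*t) * (R - t)) := by continuity
  rw [intervalIntegral.integral_eq_sub_of_hasDerivAt
    (fun t _ => aux_deriv a R ha t) (hcont.intervalIntegrable 0 R)]
  have h1 : (0:ℝ) ≤ R/a := div_nonneg hR ha.le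
  have h2 : (0:ℝ) < a^2 := by positivity
  have h3 : Real.exp (a*0) = 1 := by norm_num
  rw [h3]
  have : Real.exp (a*R) * (R - R) / a = 0 := by simp
  rw [this]
  have h4 : (0:ℝ) ≤ 1*R/a + 1/a^2 := by positivity
  simp only [sub_zero] at *
  linarith [h4]

lemma aux_lint (a R : ℝ) (ha : 0 < a) (hR : 0 < R) :
    ∫⁻ t in Ioi (0:ℝ), ENNReal.ofReal (Real.exp (a*t) * max (R - t) 0)
      ≤ ENNReal.ofReal (Real.exp (a*R) / a^2) := by
  have hsplit : Ioi (0:ℝ) = Ioc 0 R ∪ Ioi R := (Ioc_union_Ioi_eq_Ioi hR.le).symm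
  have hdisj : Disjoint (Ioc (0:ℝ) R) (Ioi R) := Ioc_disjoint_Ioi le_rfl
  rw [hsplit, lintegral_union measurableSet_Ioi hdisj]
  have h2 : ∫⁻ t in Ioi R, ENNReal.ofReal (Real.exp (a*t) * max (R - t) 0) = 0 := by
    rw [setLIntegral_congr_fun measurableSet_Ioi
      ((fun t (ht : t ∈ Ioi R) => by
        have : max (R - t) 0 = 0 := max_eq_right (by simp at ht; linarith)
        rw [this, mul_zero, ENNReal.ofReal_zero]))]
    simp
  have h1 : ∫⁻ t in Ioc (0:ℝ) R, ENNReal.ofReal (Real.exp (a*t) * max (R - t) 0)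
      = ENNReal.ofReal (∫ t in Ioc (0:ℝ) R, Real.exp (a*t) * (R - t)) := by
    rw [setLIntegral_congr_fun measurableSet_Ioc
      ((fun t (ht : t ∈ Ioc 0 R) => by
        have : max (R - t) 0 = R - t := max_eq_left (by simp at ht; linarith [ht.2])
        rw [this]))]
    rw [ofReal_integral_eq_lintegral_ofReal]
    · exact (Continuous.integrableOn_Ioc (by continuity))
    · refine (ae_restrict_iff' measurableSet_Ioc).2 (ae_of_all _ (fun t ht => ?_))
      have h := ht.2
      have : (0:ℝ) ≤ R - t := by linarith
      exact mul_nonneg (Real.exp_pos _).le this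
  rw [h1, h2, add_zero]
  exact ENNReal.ofReal_le_ofReal (aux_int_val a R ha hR.le)

theorem stmt_17 {Y : Type*} [MeasurableSpace Y] (μ : Measure Y) [IsProbabilityMeasure μ]
    (R : Y → ℝ) (hRmeas : Measurable R) (hRpos : ∀ y, 0 < R y)
    (hRint : Integrable R μ)
    (a : ℝ) (ha : 0 < a) (hexp : Integrable (fun y => Real.exp (a * R y)) μ)
    (Rbar : ℝ) (hRbar : Rbar = ∫ y, R y ∂μ) (hRbarpos : 0 < Rbar)
    (v w : Y → ℝ → ℝ)
    (hvmeas : Measurable (Function.uncurry v)) (hwmeas : Measurable (Function.uncurry w))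
    (Mv Mw : ℝ) (hvbd : ∀ y u, |v y u| ≤ Mv) (hwbd : ∀ y u, |w y u| ≤ Mw)
    (J₀ : ℝ → ℝ)
    (hJ₀ : ∀ t, J₀ t = (1 / Rbar) *
      ∫ y, (∫ u in Set.Ioc (0:ℝ) (R y),
        if t + u < R y then v y u * w y (t + u) else 0) ∂μ) :
    DifferentiableOn ℂ
        (fun s : ℂ => ∫ t in Set.Ioi (0:ℝ), Complex.exp (-s * t) * (J₀ t : ℂ))
        {s : ℂ | -a < s.re} ∧
      ∀ s : ℂ, -a ≤ s.re →
        ‖∫ t in Set.Ioi (0:ℝ), Complex.exp (-s * t) * (J₀ t : ℂ)‖ ≤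
          (1 / Rbar) * (a ^ 2)⁻¹ * (∫ y, Real.exp (a * R y) ∂μ) * Mv * Mw := by
  classical
  have hY : Nonempty Y := by
    by_contra h
    rw [not_nonempty_iff] at h
    have h1 : μ Set.univ = 1 := measure_univ
    rw [Set.univ_eq_empty_iff.2 h, measure_empty] at h1
    exact zero_ne_one h1
  obtain ⟨y₀⟩ := hY
  have hMv : 0 ≤ Mv := le_trans (abs_nonneg _) (hvbd y₀ 0)
  have hMw : 0 ≤ Mw := le_trans (abs_nonneg _) (hwbd y₀ 0)
  set K : ℝ := ∫ y, Real.exp (a * R y) ∂μ with hK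
  have hK0 : 0 ≤ K := integral_nonneg fun y => (Real.exp_pos _).le
  set C : ℝ := (1/Rbar) * (Mv * Mw) with hC
  have hC0 : 0 ≤ C := by positivity
  -- joint measurability of the inner integrand
  set f1 : (ℝ × Y) → ℝ → ℝ := fun q u =>
    if u ∈ Set.Ioc (0:ℝ) (R q.2) then
      (if q.1 + u < R q.2 then v q.2 u * w q.2 (q.1 + u) else 0) else 0 with hf1
  have hmemIoc : MeasurableSet {p : (ℝ × Y) × ℝ | p.2 ∈ Set.Ioc (0:ℝ) (R p.1.2)} := by
    have h1 : MeasurableSet {p : (ℝ × Y) × ℝ | 0 < p.2} :=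
      measurableSet_lt measurable_const measurable_snd
    have h2 : MeasurableSet {p : (ℝ × Y) × ℝ | p.2 ≤ R p.1.2} :=
      measurableSet_le measurable_snd (hRmeas.comp measurable_fst.snd)
    have : {p : (ℝ × Y) × ℝ | p.2 ∈ Set.Ioc (0:ℝ) (R p.1.2)}
        = {p | 0 < p.2} ∩ {p | p.2 ≤ R p.1.2} := by
      ext p; simp [Set.mem_Ioc]
    rw [this]; exact h1.inter h2
  have hcore : Measurable (Function.uncurry f1) := by
    rw [hf1]
    apply Measurable.ite hmemIoc
    · apply Measurable.ite
      · exact measurableSet_lt (measurable_fst.fst.add measurable_snd)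
          (hRmeas.comp measurable_fst.snd)
      · exact (hvmeas.comp (measurable_fst.snd.prodMk measurable_snd)).mul
          (hwmeas.comp (measurable_fst.snd.prodMk (measurable_fst.fst.add measurable_snd)))
      · exact measurable_const
    · exact measurable_const
  set F1 : ℝ × Y → ℝ := fun q => ∫ u, f1 q u with hF1def
  have hF1meas : StronglyMeasurable F1 := hcore.stronglyMeasurable.integral_prod_right
  have hF1eq : ∀ t y, F1 (t, y) = ∫ u in Set.Ioc (0:ℝ) (R y),
      (if t + u < R y then v y u * w y (t + u) else 0) := by
    intro t y
    have hr : F1 (t, y) = ∫ u, f1 (t, y) u := rfl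
    rw [hr, ← integral_indicator measurableSet_Ioc]
    congr 1
    funext u
    simp only [hf1, Set.indicator_apply]
  have hJeq : J₀ = fun t => (1/Rbar) * ∫ y, F1 (t, y) ∂μ := by
    funext t
    rw [hJ₀ t]
    congr 1
    exact integral_congr_ae (Filter.Eventually.of_forall fun y => (hF1eq t y).symm)
  have hJmeas : StronglyMeasurable J₀ := by
    rw [hJeq]
    exact (StronglyMeasurable.integral_prod_right (f := fun t y => F1 (t, y)) (ν := μ) hF1meas).const_mul _
  -- pointwise bound on F1
  have hF1bd : ∀ t y, 0 ≤ t → |F1 (t, y)| ≤ Mv * Mw * max (R y - t) 0 := by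
    intro t y ht
    rw [hF1eq]
    have hrw : (fun u => if t + u < R y then v y u * w y (t + u) else 0)
        = fun u => (Set.Iio (R y - t)).indicator (fun u => v y u * w y (t + u)) u := by
      funext u
      simp only [Set.indicator_apply, Set.mem_Iio, lt_sub_iff_add_lt']
    rw [hrw, setIntegral_indicator measurableSet_Iio]
    have hsub : Set.Ioc 0 (R y) ∩ Set.Iio (R y - t) ⊆ Set.Ioo 0 (R y - t) := by
      rintro u ⟨hu1, hu2⟩
      exact ⟨hu1.1, hu2⟩
    have hfin : volume (Set.Ioc 0 (R y) ∩ Set.Iio (R y - t)) < ⊤ :=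
      lt_of_le_of_lt (measure_mono Set.inter_subset_left)
        (by rw [Real.volume_Ioc]; exact ENNReal.ofReal_lt_top)
    have hbd : ∀ u ∈ Set.Ioc 0 (R y) ∩ Set.Iio (R y - t),
        ‖v y u * w y (t + u)‖ ≤ Mv * Mw := by
      intro u _
      rw [Real.norm_eq_abs, abs_mul]
      exact mul_le_mul (hvbd y u) (hwbd y (t + u)) (abs_nonneg _) hMv
    have hmeas2 : AEStronglyMeasurable (fun u => v y u * w y (t + u))
        (volume.restrict (Set.Ioc 0 (R y) ∩ Set.Iio (R y - t))) := by
      refine Measurable.aestronglyMeasurable ?_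
      exact ((hvmeas.comp (measurable_const.prodMk measurable_id)).mul
        (hwmeas.comp (measurable_const.prodMk (measurable_const.add measurable_id))))
    have h1 := norm_setIntegral_le_of_norm_le_const hfin hbd
    rw [Real.norm_eq_abs] at h1
    refine h1.trans ?_
    apply mul_le_mul_of_nonneg_left _ (mul_nonneg hMv hMw)
    have h2 : volume (Set.Ioc 0 (R y) ∩ Set.Iio (R y - t)) ≤ ENNReal.ofReal (R y - t) := by
      refine (measure_mono hsub).trans ?_
      simp [Real.volume_Ioo]
    calc (volume (Set.Ioc 0 (R y) ∩ Set.Iio (R y - t))).toReal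
        ≤ (ENNReal.ofReal (R y - t)).toReal :=
          ENNReal.toReal_mono ENNReal.ofReal_ne_top h2
      _ = max (R y - t) 0 := by rw [ENNReal.toReal_ofReal']
  -- integrability of max (R - t) 0
  have hmax_int : ∀ t : ℝ, Integrable (fun y => max (R y - t) 0) μ := fun t =>
    (hRint.sub (integrable_const t)).pos_part
  have hJbd : ∀ t, 0 ≤ t → |J₀ t| ≤ C * ∫ y, max (R y - t) 0 ∂μ := by
    intro t ht
    rw [hJeq]
    simp only
    rw [abs_mul, abs_of_pos (by positivity : (0:ℝ) < 1/Rbar)]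
    have h1 : |∫ y, F1 (t, y) ∂μ| ≤ ∫ y, Mv * Mw * max (R y - t) 0 ∂μ := by
      rw [← Real.norm_eq_abs]
      refine (norm_integral_le_integral_norm _).trans ?_
      refine integral_mono_of_nonneg (Filter.Eventually.of_forall fun y => norm_nonneg _)
        ((hmax_int t).const_mul _) (Filter.Eventually.of_forall fun y => ?_)
      show ‖F1 (t, y)‖ ≤ Mv * Mw * max (R y - t) 0
      rw [Real.norm_eq_abs]
      exact hF1bd t y ht
    calc (1/Rbar) * |∫ y, F1 (t, y) ∂μ| ≤ (1/Rbar) * ∫ y, Mv * Mw * max (R y - t) 0 ∂μ :=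
          mul_le_mul_of_nonneg_left h1 (by positivity)
      _ = C * ∫ y, max (R y - t) 0 ∂μ := by
          rw [integral_const_mul, hC]; ring
  -- Step 4: the dominating function g0 and its integral bound
  have hg0m : StronglyMeasurable (fun t : ℝ => ∫ y, max (R y - t) 0 ∂μ) := by
    have hm : StronglyMeasurable (Function.uncurry (fun (t : ℝ) (y : Y) => max (R y - t) 0)) := by
      apply Measurable.stronglyMeasurable
      exact ((hRmeas.comp measurable_snd).sub measurable_fst).max measurable_const
    exact hm.integral_prod_right
  set g0 : ℝ → ℝ := fun t => Real.exp (a*t) * ∫ y, max (R y - t) 0 ∂μ with hg0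
  have hg0nn : ∀ t, 0 ≤ g0 t :=
    fun t => mul_nonneg (Real.exp_pos _).le (integral_nonneg fun y => le_max_right _ _)
  have hg0meas : StronglyMeasurable g0 :=
    ((Real.continuous_exp.comp (continuous_const.mul continuous_id)).stronglyMeasurable).mul hg0m
  have hψmeas : Measurable (fun p : ℝ × Y => ENNReal.ofReal (Real.exp (a*p.1) * max (R p.2 - p.1) 0)) := by
    apply ENNReal.measurable_ofReal.comp
    exact ((Real.measurable_exp.comp (measurable_fst.const_mul a)).mul
      (((hRmeas.comp measurable_snd).sub measurable_fst).max measurable_const))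
  have heqt : ∀ t : ℝ, ENNReal.ofReal (g0 t)
      = ∫⁻ y, ENNReal.ofReal (Real.exp (a*t) * max (R y - t) 0) ∂μ := by
    intro t
    have h1 : g0 t = ∫ y, Real.exp (a*t) * max (R y - t) 0 ∂μ := by
      rw [hg0]; exact (integral_const_mul _ _).symm
    rw [h1, ofReal_integral_eq_lintegral_ofReal ((hmax_int t).const_mul _)
      (Filter.Eventually.of_forall fun y => mul_nonneg (Real.exp_pos _).le (le_max_right _ _))]
  have hkey : ∫⁻ t in Ioi (0:ℝ), ENNReal.ofReal (g0 t) ≤ ENNReal.ofReal (K / a^2) := by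
    calc ∫⁻ t in Ioi (0:ℝ), ENNReal.ofReal (g0 t)
        = ∫⁻ t in Ioi (0:ℝ), ∫⁻ y, ENNReal.ofReal (Real.exp (a*t) * max (R y - t) 0) ∂μ := by
          exact lintegral_congr fun t => heqt t
      _ = ∫⁻ y, (∫⁻ t in Ioi (0:ℝ), ENNReal.ofReal (Real.exp (a*t) * max (R y - t) 0)) ∂μ := by
          exact lintegral_lintegral_swap
            (f := fun t y => ENNReal.ofReal (Real.exp (a*t) * max (R y - t) 0))
            hψmeas.aemeasurable
      _ ≤ ∫⁻ y, ENNReal.ofReal (Real.exp (a * R y) / a^2) ∂μ :=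
          lintegral_mono fun y => aux_lint a (R y) ha (hRpos y)
      _ = ENNReal.ofReal (∫ y, Real.exp (a * R y) / a^2 ∂μ) :=
          (ofReal_integral_eq_lintegral_ofReal (hexp.div_const _)
            (Filter.Eventually.of_forall fun y => by positivity)).symm
      _ = ENNReal.ofReal (K / a^2) := by rw [integral_div]
  have hg0int : IntegrableOn g0 (Ioi (0:ℝ)) := by
    refine ⟨hg0meas.aestronglyMeasurable, ?_⟩
    rw [hasFiniteIntegral_iff_ofReal (Filter.Eventually.of_forall hg0nn)]
    exact lt_of_le_of_lt hkey ENNReal.ofReal_lt_top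
  have hg0val : ∫ t in Ioi (0:ℝ), g0 t ≤ K / a^2 := by
    rw [integral_eq_lintegral_of_nonneg_ae (Filter.Eventually.of_forall hg0nn)
      hg0meas.aestronglyMeasurable]
    exact ENNReal.toReal_le_of_le_ofReal (by positivity) hkey
  -- Step 5: integrability and bound of the Laplace integrand
  have hLmeas : ∀ s : ℂ, AEStronglyMeasurable (fun t : ℝ => Complex.exp (-s*t) * (J₀ t : ℂ))
      (volume.restrict (Ioi (0:ℝ))) := by
    intro s
    exact ((Complex.continuous_exp.comp
      (continuous_const.mul Complex.continuous_ofReal)).stronglyMeasurable.mul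
      (Complex.continuous_ofReal.comp_stronglyMeasurable hJmeas)).aestronglyMeasurable
  have hLbd : ∀ (s : ℂ), -a ≤ s.re → ∀ t ∈ Ioi (0:ℝ),
      ‖Complex.exp (-s*t) * (J₀ t : ℂ)‖ ≤ C * g0 t := by
    intro s hs t ht
    have ht0 : 0 < t := ht
    have h1 : ‖Complex.exp (-s*(t:ℂ)) * (J₀ t : ℂ)‖ = Real.exp (-(s.re)*t) * |J₀ t| := by
      rw [norm_mul, Complex.norm_exp, Complex.norm_real,
        Real.norm_eq_abs]
      congr 2
      simp [Complex.mul_re]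
    rw [h1]
    have h2 : Real.exp (-(s.re)*t) ≤ Real.exp (a*t) :=
      Real.exp_le_exp.2 (mul_le_mul_of_nonneg_right (by linarith) ht0.le)
    calc Real.exp (-(s.re)*t) * |J₀ t|
        ≤ Real.exp (a*t) * (C * ∫ y, max (R y - t) 0 ∂μ) :=
          mul_le_mul h2 (hJbd t ht0.le) (abs_nonneg _) (Real.exp_pos _).le
      _ = C * g0 t := by rw [hg0]; ring
  have hLint : ∀ s : ℂ, -a ≤ s.re →
      IntegrableOn (fun t : ℝ => Complex.exp (-s*t) * (J₀ t : ℂ)) (Ioi (0:ℝ)) := by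
    intro s hs
    refine Integrable.mono (hg0int.const_mul C) (hLmeas s) ?_
    refine (ae_restrict_iff' measurableSet_Ioi).2 (Filter.Eventually.of_forall fun t ht => ?_)
    refine (hLbd s hs t ht).trans ?_
    rw [Real.norm_eq_abs, abs_of_nonneg (mul_nonneg hC0 (hg0nn t))]
  have hbound : ∀ s : ℂ, -a ≤ s.re →
      ‖∫ t in Ioi (0:ℝ), Complex.exp (-s*t) * (J₀ t : ℂ)‖ ≤
        (1 / Rbar) * (a ^ 2)⁻¹ * K * Mv * Mw := by
    intro s hs
    calc ‖∫ t in Ioi (0:ℝ), Complex.exp (-s*t) * (J₀ t : ℂ)‖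
        ≤ ∫ t in Ioi (0:ℝ), ‖Complex.exp (-s*t) * (J₀ t : ℂ)‖ :=
          norm_integral_le_integral_norm _
      _ ≤ ∫ t in Ioi (0:ℝ), C * g0 t := by
          refine integral_mono_of_nonneg (Filter.Eventually.of_forall fun t => norm_nonneg _)
            (hg0int.const_mul C) ?_
          exact (ae_restrict_iff' measurableSet_Ioi).2
            (Filter.Eventually.of_forall fun t ht => hLbd s hs t ht)
      _ = C * ∫ t in Ioi (0:ℝ), g0 t := integral_const_mul _ _
      _ ≤ C * (K / a^2) := mul_le_mul_of_nonneg_left hg0val hC0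
      _ = (1 / Rbar) * (a ^ 2)⁻¹ * K * Mv * Mw := by rw [hC]; field_simp
  -- exponential decay of J₀
  have hmax_exp : ∀ t : ℝ, ∫ y, max (R y - t) 0 ∂μ ≤ Real.exp (-(a*t)) * (K/a) := by
    intro t
    have hptw : ∀ y, max (R y - t) 0 ≤ (Real.exp (-(a*t))/a) * Real.exp (a * R y) := by
      intro y
      have hval : (Real.exp (-(a*t))/a) * Real.exp (a * R y) = Real.exp (a*(R y - t))/a := by
        rw [div_mul_eq_mul_div, ← Real.exp_add]
        congr 2
        ring
      rw [hval]
      rcases le_total (R y - t) 0 with h|h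
      · rw [max_eq_right h]; positivity
      · rw [max_eq_left h]
        rw [le_div_iff₀ ha]
        have h2 := Real.add_one_le_exp (a*(R y - t))
        nlinarith [Real.exp_pos (a*(R y - t))]
    calc ∫ y, max (R y - t) 0 ∂μ ≤ ∫ y, (Real.exp (-(a*t))/a) * Real.exp (a * R y) ∂μ :=
          integral_mono_of_nonneg (Filter.Eventually.of_forall fun y => le_max_right _ _)
            (hexp.const_mul _) (Filter.Eventually.of_forall hptw)
      _ = Real.exp (-(a*t)) * (K/a) := by rw [integral_const_mul]; ring
  set C1 : ℝ := C * (K/a) with hC1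
  have hC10 : 0 ≤ C1 := by positivity
  have hJexp : ∀ t : ℝ, 0 ≤ t → |J₀ t| ≤ C1 * Real.exp (-(a*t)) := by
    intro t ht
    refine (hJbd t ht).trans ?_
    calc C * ∫ y, max (R y - t) 0 ∂μ ≤ C * (Real.exp (-(a*t)) * (K/a)) :=
          mul_le_mul_of_nonneg_left (hmax_exp t) hC0
      _ = C1 * Real.exp (-(a*t)) := by rw [hC1]; ring
  -- differentiability
  have hdiff : DifferentiableOn ℂ
      (fun s : ℂ => ∫ t in Ioi (0:ℝ), Complex.exp (-s * t) * (J₀ t : ℂ))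
      {s : ℂ | -a < s.re} := by
    intro s₀ hs₀
    have hre : -a < s₀.re := hs₀
    set ε : ℝ := (s₀.re + a)/2 with hε
    have hε0 : 0 < ε := by rw [hε]; linarith
    set bnd : ℝ → ℝ := fun t => C1 * (t * Real.exp (-ε*t)) with hbnd
    have hbndint : IntegrableOn bnd (Ioi (0:ℝ)) := by
      have hbig : IntegrableOn (fun t : ℝ => (2/ε) * Real.exp (-(ε/2)*t)) (Ioi (0:ℝ)) :=
        (exp_neg_integrableOn_Ioi 0 (by linarith)).const_mul _
      have hmid : IntegrableOn (fun t : ℝ => t * Real.exp (-ε*t)) (Ioi (0:ℝ)) := by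
        refine Integrable.mono hbig ?_ ?_
        · exact (continuous_id.mul
            (Real.continuous_exp.comp (continuous_const.mul continuous_id))).aestronglyMeasurable
        · refine (ae_restrict_iff' measurableSet_Ioi).2
            (Filter.Eventually.of_forall fun t ht => ?_)
          have ht0 : (0:ℝ) < t := ht
          have h1 : t ≤ (2/ε) * Real.exp ((ε/2)*t) := by
            have h3 : (ε/2)*t ≤ Real.exp ((ε/2)*t) := by
              nlinarith [Real.add_one_le_exp ((ε/2)*t)]
            calc t = (2/ε) * ((ε/2)*t) := by field_simp
              _ ≤ (2/ε) * Real.exp ((ε/2)*t) :=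
                  mul_le_mul_of_nonneg_left h3 (by positivity)
          rw [Real.norm_eq_abs, Real.norm_eq_abs,
            abs_of_nonneg (by positivity : (0:ℝ) ≤ t * Real.exp (-ε*t)),
            abs_of_nonneg (by positivity : (0:ℝ) ≤ (2/ε) * Real.exp (-(ε/2)*t))]
          calc t * Real.exp (-ε*t) ≤ ((2/ε) * Real.exp ((ε/2)*t)) * Real.exp (-ε*t) :=
                mul_le_mul_of_nonneg_right h1 (Real.exp_pos _).le
            _ = (2/ε) * Real.exp (-(ε/2)*t) := by
                rw [mul_assoc, ← Real.exp_add]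
                congr 2
                ring
      exact hmid.const_mul C1
    have hkey := hasDerivAt_integral_of_dominated_loc_of_deriv_le (𝕜 := ℂ)
      (μ := volume.restrict (Ioi (0:ℝ)))
      (F := fun (s : ℂ) (t : ℝ) => Complex.exp (-s * t) * (J₀ t : ℂ))
      (F' := fun (s : ℂ) (t : ℝ) => (-(t:ℂ)) * (Complex.exp (-s * t) * (J₀ t : ℂ)))
      (x₀ := s₀) (bound := bnd) (s := Metric.ball s₀ ε) (Metric.ball_mem_nhds s₀ hε0)
      (Filter.Eventually.of_forall fun s => hLmeas s)
      (hLint s₀ hre.le)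
      ?_ ?_ hbndint ?_
    · exact hkey.2.differentiableAt.differentiableWithinAt
    · exact ((Complex.continuous_ofReal.neg.stronglyMeasurable).mul
        ((Complex.continuous_exp.comp
          (continuous_const.mul Complex.continuous_ofReal)).stronglyMeasurable.mul
          (Complex.continuous_ofReal.comp_stronglyMeasurable hJmeas))).aestronglyMeasurable
    · refine (ae_restrict_iff' measurableSet_Ioi).2
        (Filter.Eventually.of_forall fun t ht => ?_)
      intro s hsball
      have ht0 : (0:ℝ) < t := ht
      have hsre : -a + ε < s.re := by
        have h1 : |s.re - s₀.re| ≤ ‖s - s₀‖ := by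
          have := Complex.abs_re_le_norm (s - s₀)
          simpa using this
        have h2 : ‖s - s₀‖ < ε := by
          rw [← Complex.dist_eq]
          exact Metric.mem_ball.1 hsball
        have h3 : |s.re - s₀.re| < ε := lt_of_le_of_lt h1 h2
        have h4 : s₀.re - s.re < ε := by
          cases abs_lt.1 h3 with
          | intro hl hr => linarith
        have : s₀.re = -a + 2*ε := by rw [hε]; ring
        linarith
      have hnorm : ‖(-(t:ℂ)) * (Complex.exp (-s * t) * (J₀ t : ℂ))‖
          = t * (Real.exp (-(s.re)*t) * |J₀ t|) := by
        rw [norm_mul, norm_mul, norm_neg, Complex.norm_real, Real.norm_eq_abs,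
          abs_of_pos ht0, Complex.norm_exp, Complex.norm_real,
          Real.norm_eq_abs]
        congr 3
        simp [Complex.mul_re]
      rw [hnorm, hbnd]
      have h5 : Real.exp (-(s.re)*t) ≤ Real.exp ((a - ε)*t) :=
        Real.exp_le_exp.2 (mul_le_mul_of_nonneg_right (by linarith) ht0.le)
      calc t * (Real.exp (-(s.re)*t) * |J₀ t|)
          ≤ t * (Real.exp ((a - ε)*t) * (C1 * Real.exp (-(a*t)))) := by
            refine mul_le_mul_of_nonneg_left ?_ ht0.le
            exact mul_le_mul h5 (hJexp t ht0.le) (abs_nonneg _) (Real.exp_pos _).le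
        _ = C1 * (t * Real.exp (-ε*t)) := by
            have hE : Real.exp ((a - ε)*t) * Real.exp (-(a*t)) = Real.exp (-ε*t) := by
              rw [← Real.exp_add]; congr 1; ring
            calc t * (Real.exp ((a - ε)*t) * (C1 * Real.exp (-(a*t))))
                = C1 * (t * (Real.exp ((a - ε)*t) * Real.exp (-(a*t)))) := by ring
              _ = C1 * (t * Real.exp (-ε*t)) := by rw [hE]
    · refine Filter.Eventually.of_forall fun t => ?_
      intro s hsball
      have h1 : HasDerivAt (fun s : ℂ => -s * (t:ℂ)) (-(t:ℂ)) s := by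
        simpa using ((hasDerivAt_id s).neg.mul_const (t:ℂ))
      have h2 := (Complex.hasDerivAt_exp (-s * (t:ℂ))).comp s h1
      have h3 := h2.mul_const (J₀ t : ℂ)
      refine h3.congr_deriv ?_
      ring
  exact ⟨hdiff, hbound⟩
end
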